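/- For every finite group G, b1(G) = l(G): the maximum over all permutation representations of G of the maximum size of an irredundant base equals the length of the longest chain of subgroups of G. -/

import Mathlib

/-- A base: the pointwise stabiliser of the sequence equals the kernel of the action. -/
def IsBase (G : Type) [Group G] {Ω : Type} [MulAction G Ω] {k : ℕ} (b : Fin k → Ω) : Prop :=
  ∀ g : G, (∀ i, g • b i = b i) → ∀ ω : Ω, g • ω = ω

/-- Irredundant: no point is fixed by the pointwise stabiliser of its predecessors. -/
def IsIrredundant (G : Type) [Group G] {Ω : Type} [MulAction G Ω] {k : ℕ} (b : Fin k → Ω) : Prop :=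
  ∀ i : Fin k, ∃ g : G, (∀ j, j < i → g • b j = b j) ∧ g • b i ≠ b i

/-- Minimal: no point is fixed by the pointwise stabiliser of the other points. -/
def IsMinimal (G : Type) [Group G] {Ω : Type} [MulAction G Ω] {k : ℕ} (b : Fin k → Ω) : Prop :=
  ∀ i : Fin k, ∃ g : G, (∀ j, j ≠ i → g • b j = b j) ∧ g • b i ≠ b i

noncomputable def b1 (G : Type) [Group G] : ℕ :=
  sSup {k | ∃ (Ω : Type) (_ : Finite Ω) (m : MulAction G Ω), ∃ b : Fin k → Ω,
    @IsBase G _ Ω m k b ∧ @IsIrredundant G _ Ω m k b}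

noncomputable def b2 (G : Type) [Group G] : ℕ :=
  sSup {k | ∃ (Ω : Type) (_ : Finite Ω) (m : MulAction G Ω), ∃ b : Fin k → Ω,
    @IsBase G _ Ω m k b ∧ @IsMinimal G _ Ω m k b}

noncomputable def minBaseSize (G : Type) [Group G] (Ω : Type) [MulAction G Ω] : ℕ :=
  sInf {k | ∃ b : Fin k → Ω, IsBase G b}

noncomputable def b3 (G : Type) [Group G] : ℕ :=
  sSup {k | ∃ (Ω : Type) (_ : Finite Ω) (m : MulAction G Ω), k = @minBaseSize G _ Ω m}

/-- The length of the longest chain of subgroups of `G`. -/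
noncomputable def subgroupChainLength (G : Type) [Group G] : ℕ :=
  sSup {l | ∃ c : Fin (l + 1) → Subgroup G, StrictAnti c ∧ c 0 = ⊤ ∧ c (Fin.last l) = ⊥}

def IsFaithfulAction (G Ω : Type) [Group G] [MulAction G Ω] : Prop :=
  ∀ g : G, (∀ ω : Ω, g • ω = ω) → g = 1

def IsTransitiveAction (G Ω : Type) [Group G] [MulAction G Ω] : Prop :=
  ∀ x y : Ω, ∃ g : G, g • x = y

def IsPrimitiveAction (G Ω : Type) [Group G] [MulAction G Ω] : Prop :=
  IsTransitiveAction G Ω ∧ Nontrivial Ω ∧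
    ∀ r : Setoid Ω, (∀ (g : G) (x y : Ω), r.r x y → r.r (g • x) (g • y)) → r = ⊥ ∨ r = ⊤

def IsIndependent (G : Type) [Group G] (S : Finset G) : Prop :=
  ∀ g ∈ S, g ∉ Subgroup.closure ((S : Set G) \ {g})

noncomputable def maxIndependent (G : Type) [Group G] : ℕ :=
  sSup {n | ∃ S : Finset G, S.card = n ∧ IsIndependent G S}

def IsJoinEmbedding (G : Type) [Group G] (n : ℕ) (f : Finset (Fin n) → Subgroup G) : Prop :=
  Function.Injective f ∧ f ∅ = ⊥ ∧ ∀ I J, f (I ∪ J) = f I ⊔ f J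

def IsMeetEmbedding (G : Type) [Group G] (n : ℕ) (f : Finset (Fin n) → Subgroup G) : Prop :=
  Function.Injective f ∧ f ∅ = ⊤ ∧ ∀ I J, f (I ∪ J) = f I ⊓ f J

-- chain set bounded
lemma chainSet_bdd (G : Type) [Group G] [Finite G] :
    BddAbove {l | ∃ c : Fin (l + 1) → Subgroup G, StrictAnti c ∧ c 0 = ⊤ ∧ c (Fin.last l) = ⊥} := by
  refine ⟨Nat.card (Subgroup G), fun l hl => ?_⟩
  obtain ⟨c, hc, -, -⟩ := hl
  have : l + 1 ≤ Nat.card (Subgroup G) := by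
    simpa using Nat.card_le_card_of_injective c hc.injective
  omega

-- ≤ direction, pointwise
lemma mem_le_chain (G : Type) [Group G] [Finite G] (k : ℕ)
    (hk : k ∈ {k | ∃ (Ω : Type) (_ : Finite Ω) (m : MulAction G Ω), ∃ b : Fin k → Ω,
      @IsBase G _ Ω m k b ∧ @IsIrredundant G _ Ω m k b}) :
    k ≤ subgroupChainLength G := by
  obtain ⟨Ω, _, m, b, hB, hI⟩ := hk
  letI := m
  set c : Fin (k + 1) → Subgroup G :=
    fun i => ⨅ j : Fin k, ⨅ _ : (j : ℕ) < (i : ℕ), MulAction.stabilizer G (b j) with hcdef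
  have hmem : ∀ (g : G) (i : Fin (k+1)), g ∈ c i ↔ ∀ j : Fin k, (j : ℕ) < (i : ℕ) → g • b j = b j := by
    intro g i
    simp [hcdef, Subgroup.mem_iInf, MulAction.mem_stabilizer_iff]
  have hanti : Antitone c := by
    intro i i' h
    intro g hg
    rw [hmem] at *
    exact fun j hj => hg j (lt_of_lt_of_le hj h)
  have hc : StrictAnti c := by
    intro i i' h
    rw [SetLike.lt_iff_le_and_exists]
    refine ⟨hanti h.le, ?_⟩
    have hik : (i : ℕ) < k := by
      have := h
      rw [Fin.lt_def] at this
      omega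
    obtain ⟨g, hg1, hg2⟩ := hI ⟨i, hik⟩
    refine ⟨g, (hmem g i).2 fun j hj => hg1 j (by rwa [Fin.lt_def]), ?_⟩
    rw [hmem]
    intro hall
    exact hg2 (hall ⟨i, hik⟩ (by simpa using h))
  have hc0 : c 0 = ⊤ := by
    rw [eq_top_iff]
    intro g _
    rw [hmem]
    intro j hj
    simp at hj
  have hker : ∀ g ∈ c (Fin.last k), ∀ ω : Ω, g • ω = ω := by
    intro g hg
    exact hB g fun i => (hmem g (Fin.last k)).1 hg i i.isLt
  by_cases hN : c (Fin.last k) = ⊥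
  · have : k ∈ {l | ∃ c : Fin (l + 1) → Subgroup G, StrictAnti c ∧ c 0 = ⊤ ∧ c (Fin.last l) = ⊥} :=
      ⟨c, hc, hc0, hN⟩
    exact le_csSup (chainSet_bdd G) this
  · set d : Fin (k + 1 + 1) → Subgroup G := Fin.snoc c ⊥ with hddef
    have hd : StrictAnti d := by
      intro i j hij
      rcases Fin.eq_castSucc_or_eq_last j with ⟨j', rfl⟩ | rfl
      · obtain ⟨i', rfl⟩ : ∃ i', i = Fin.castSucc i' := by
          refine (Fin.eq_castSucc_or_eq_last i).resolve_right ?_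
          rintro rfl
          exact absurd hij (Fin.castSucc_lt_last j').asymm
        simp only [hddef, Fin.snoc_castSucc]
        exact hc (by rwa [Fin.castSucc_lt_castSucc_iff] at hij)
      · obtain ⟨i', rfl⟩ : ∃ i', i = Fin.castSucc i' := by
          refine (Fin.eq_castSucc_or_eq_last i).resolve_right ?_
          rintro rfl
          exact absurd hij (lt_irrefl _)
        simp only [hddef, Fin.snoc_castSucc, Fin.snoc_last]
        refine bot_lt_iff_ne_bot.2 fun h => hN ?_
        have : c (Fin.last k) ≤ c i' := hanti (Fin.le_last i')
        rw [h] at this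
        exact le_bot_iff.1 this
    have hmem2 : (k + 1) ∈ {l | ∃ c : Fin (l + 1) → Subgroup G, StrictAnti c ∧ c 0 = ⊤ ∧ c (Fin.last l) = ⊥} := by
      refine ⟨d, hd, ?_, ?_⟩
      · show d (Fin.castSucc 0) = ⊤
        rw [hddef, Fin.snoc_castSucc, hc0]
      · simp [hddef]
    exact le_trans (Nat.le_succ k) (le_csSup (chainSet_bdd G) hmem2)

-- ≥ direction: chain gives representation
lemma chain_mem (G : Type) [Group G] [Finite G] (l : ℕ)
    (hl : l ∈ {l | ∃ c : Fin (l + 1) → Subgroup G, StrictAnti c ∧ c 0 = ⊤ ∧ c (Fin.last l) = ⊥}) :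
    l ∈ {k | ∃ (Ω : Type) (_ : Finite Ω) (m : MulAction G Ω), ∃ b : Fin k → Ω,
      @IsBase G _ Ω m k b ∧ @IsIrredundant G _ Ω m k b} := by
  obtain ⟨c, hc, hc0, hcl⟩ := hl
  set Ω : Type := Σ i : Fin l, G ⧸ c i.succ with hΩ
  set b : Fin l → Ω := fun i => ⟨i, ((1 : G) : G ⧸ c i.succ)⟩ with hb
  have key : ∀ (g : G) (i : Fin l), g • b i = b i ↔ g ∈ c i.succ := by
    intro g i
    show (⟨i, g • ((1 : G) : G ⧸ c i.succ)⟩ : Ω) = ⟨i, ((1 : G) : G ⧸ c i.succ)⟩ ↔ _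
    rw [sigma_mk_injective.eq_iff]
    show ((g * 1 : G) : G ⧸ c i.succ) = ((1 : G) : G ⧸ c i.succ) ↔ _
    rw [QuotientGroup.eq]
    simp
  refine ⟨Ω, inferInstance, inferInstance, b, ?_, ?_⟩
  · intro g hg ω
    have step : ∀ n (hn : n ≤ l), g ∈ c ⟨n, by omega⟩ := by
      intro n
      induction n with
      | zero => intro _; rw [show (⟨0, by omega⟩ : Fin (l+1)) = 0 from rfl, hc0]; trivial
      | succ n ih =>
        intro hn
        exact (key g ⟨n, by omega⟩).1 (hg ⟨n, by omega⟩)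
    have : g ∈ c (Fin.last l) := by
      exact step l le_rfl
    rw [hcl, Subgroup.mem_bot] at this
    rw [this, one_smul]
  · intro i
    have hlt : c i.succ < c i.castSucc := hc Fin.castSucc_lt_succ
    obtain ⟨g, hg1, hg2⟩ := SetLike.exists_of_lt hlt
    refine ⟨g, fun j hj => ?_, fun h => hg2 ((key g i).1 h)⟩
    rw [key]
    refine hc.antitone ?_ hg1
    rw [Fin.le_def]
    simp only [Fin.val_succ, Fin.coe_castSucc]
    rw [Fin.lt_def] at hj
    omega


/-- b1(G) = l(G), the length of the longest chain of subgroups of G. -/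
theorem b1_eq_subgroupChainLength (G : Type) [Group G] [Finite G] :
    b1 G = subgroupChainLength G := by
  apply le_antisymm
  · exact csSup_le' (fun k hk => mem_le_chain G k hk)
  · refine csSup_le' (fun l hl => ?_)
    exact le_csSup ⟨subgroupChainLength G, fun k hk => mem_le_chain G k hk⟩ (chain_mem G l hl)
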